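/- Let A and ε be random variables and V a random vector with A ⊥ ε | V. Let Y(a) = g(a, ε) for a measurable g with E∫|g(a,ε)|π(a)dμ(a) < ∞ for a signed weight π. Then E[∫ E[Y | A = a, V] π(a) dμ(a)] = E[∫ g(a, ε) π(a) dμ(a)], where Y = g(A, ε). -/
import Mathlib


-- Probability of an event on a finite probability space with weights `p`.
open Classical in
noncomputable def pr {Ω : Type*} [Fintype Ω] (p : Ω → ℝ) (E : Ω → Prop) : ℝ :=
  ∑ ω, if E ω then p ω else 0

-- `∑_{ω ∈ E} p ω * f ω`, the unnormalized conditional expectation of `f` on event `E`.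
open Classical in
noncomputable def cex {Ω : Type*} [Fintype Ω] (p : Ω → ℝ) (f : Ω → ℝ) (E : Ω → Prop) : ℝ :=
  ∑ ω, if E ω then p ω * f ω else 0

open Classical Finset in
lemma grp {Ω β : Type*} [Fintype Ω] (φ : Ω → β) (F : Ω → ℝ) :
    ∑ b ∈ Finset.univ.image φ, ∑ ω, (if φ ω = b then F ω else 0) = ∑ ω, F ω := by
  rw [Finset.sum_comm]
  refine Finset.sum_congr rfl fun ω _ => ?_
  rw [Finset.sum_ite_eq (Finset.univ.image φ) (φ ω) (fun _ => F ω)]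
  simp

open Classical in
lemma pr_congr {Ω : Type*} [Fintype Ω] (p : Ω → ℝ) {E F : Ω → Prop}
    (h : ∀ ω, E ω ↔ F ω) : pr p E = pr p F := by
  unfold pr; exact Finset.sum_congr rfl fun ω _ => by simp [h ω]

open Classical in
lemma cex_congr {Ω : Type*} [Fintype Ω] (p : Ω → ℝ) {f f' : Ω → ℝ} {E : Ω → Prop}
    (h : ∀ ω, E ω → f ω = f' ω) : cex p f E = cex p f' E := by
  unfold cex
  refine Finset.sum_congr rfl fun ω _ => ?_
  by_cases hE : E ω <;> simp [hE, h]

open Classical in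
lemma pr_pos {Ω : Type*} [Fintype Ω] (p : Ω → ℝ) (hp : ∀ ω, 0 < p ω) {E : Ω → Prop}
    (ω₀ : Ω) (h : E ω₀) : 0 < pr p E := by
  unfold pr
  have h1 : (if E ω₀ then p ω₀ else 0) ≤ ∑ ω, if E ω then p ω else 0 :=
    Finset.single_le_sum (f := fun ω => if E ω then p ω else 0)
      (fun ω _ => by by_cases hE : E ω <;> simp [hE, (hp ω).le])
      (Finset.mem_univ ω₀)
  calc (0:ℝ) < p ω₀ := hp ω₀
    _ = (if E ω₀ then p ω₀ else 0) := by simp [h]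
    _ ≤ _ := h1

open Classical Finset in
lemma cex_group {Ω 𝓔 : Type*} [Fintype Ω] (p : Ω → ℝ) (ε : Ω → 𝓔) (w : 𝓔 → ℝ)
    (P : Ω → Prop) :
    cex p (fun ω => w (ε ω)) P
      = ∑ e ∈ Finset.univ.image ε, w e * pr p (fun ω => P ω ∧ ε ω = e) := by
  unfold cex pr
  rw [← grp ε (fun ω => if P ω then p ω * w (ε ω) else 0)]
  refine Finset.sum_congr rfl fun e _ => ?_
  rw [Finset.mul_sum]
  refine Finset.sum_congr rfl fun ω _ => ?_
  by_cases h1 : ε ω = e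
  · subst h1; by_cases h2 : P ω <;> simp [h2, mul_comm]
  · simp [h1, fun hc : P ω ∧ ε ω = e => h1 hc.2]

open Classical Finset in
lemma tower {Ω 𝓥 : Type*} [Fintype Ω] (p : Ω → ℝ) (hp : ∀ ω, 0 < p ω)
    (V : Ω → 𝓥) (h : Ω → ℝ) :
    ∑ ω, p ω * (cex p h (fun ω' => V ω' = V ω) / pr p (fun ω' => V ω' = V ω))
      = ∑ ω, p ω * h ω := by
  rw [← grp V (fun ω => p ω * (cex p h (fun ω' => V ω' = V ω)
        / pr p (fun ω' => V ω' = V ω))),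
      ← grp V (fun ω => p ω * h ω)]
  refine Finset.sum_congr rfl fun v hv => ?_
  obtain ⟨ω₀, -, rfl⟩ := Finset.mem_image.mp hv
  have hPv : 0 < pr p (fun ω => V ω = V ω₀) := pr_pos p hp ω₀ rfl
  have step : ∀ ω, (if V ω = V ω₀ then
      p ω * (cex p h (fun ω' => V ω' = V ω) / pr p (fun ω' => V ω' = V ω)) else 0)
      = (if V ω = V ω₀ then p ω else 0)
        * (cex p h (fun ω' => V ω' = V ω₀) / pr p (fun ω' => V ω' = V ω₀)) := by
    intro ω
    by_cases hV : V ω = V ω₀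
    · simp [hV]
    · simp [hV]
  rw [Finset.sum_congr rfl fun ω _ => step ω, ← Finset.sum_mul]
  have : (∑ ω, if V ω = V ω₀ then p ω else 0) = pr p (fun ω => V ω = V ω₀) := rfl
  rw [this, mul_div_cancel₀ _ hPv.ne']
  rfl

open Classical Finset in
lemma step1 {Ω α 𝓥 𝓔 : Type*} [Fintype Ω] (p : Ω → ℝ)
    (A : Ω → α) (ε : Ω → 𝓔) (V : Ω → 𝓥) (g : α → 𝓔 → ℝ) (Y : Ω → ℝ)
    (hY : ∀ ω, Y ω = g (A ω) (ε ω)) (a : α) (v : 𝓥)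
    (hP1 : 0 < pr p (fun ω => A ω = a ∧ V ω = v))
    (hPv : 0 < pr p (fun ω => V ω = v))
    (hCI : ∀ (e : 𝓔),
      pr p (fun ω => A ω = a ∧ ε ω = e ∧ V ω = v) * pr p (fun ω => V ω = v)
        = pr p (fun ω => A ω = a ∧ V ω = v) * pr p (fun ω => ε ω = e ∧ V ω = v)) :
    cex p Y (fun ω => A ω = a ∧ V ω = v) / pr p (fun ω => A ω = a ∧ V ω = v)
      = cex p (fun ω => g a (ε ω)) (fun ω => V ω = v) / pr p (fun ω => V ω = v) := by
  rw [div_eq_div_iff hP1.ne' hPv.ne']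
  have h1 : cex p Y (fun ω => A ω = a ∧ V ω = v)
      = cex p (fun ω => g a (ε ω)) (fun ω => A ω = a ∧ V ω = v) :=
    cex_congr p fun ω h => by rw [hY ω, h.1]
  rw [h1, cex_group p ε (g a) (fun ω => A ω = a ∧ V ω = v),
      cex_group p ε (g a) (fun ω => V ω = v), Finset.sum_mul, Finset.sum_mul]
  refine Finset.sum_congr rfl fun e _ => ?_
  have h2 : pr p (fun ω => (A ω = a ∧ V ω = v) ∧ ε ω = e)
      = pr p (fun ω => A ω = a ∧ ε ω = e ∧ V ω = v) := pr_congr p (by tauto)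
  have h3 : pr p (fun ω => V ω = v ∧ ε ω = e)
      = pr p (fun ω => ε ω = e ∧ V ω = v) := pr_congr p (by tauto)
  rw [mul_assoc, mul_assoc, h2, h3, hCI e]
  ring

set_option maxHeartbeats 1000000 in
/-- with `A ⊥ ε | V` and `Y = g(A, ε)`,
`E[∫ E[Y | A = a, V] π(a) dμ(a)] = E[∫ g(a, ε) π(a) dμ(a)]`.
Discrete setting: the treatment space is finite and `π a` carries both the sign
weight and the base measure μ, so `∫ · π(a) dμ(a)` is `∑ a, π a * ·`. -/
theorem average_structural_identification
    {Ω α 𝓥 𝓔 : Type*} [Fintype Ω] [Fintype α]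
    (p : Ω → ℝ) (hp : ∀ ω, 0 < p ω) (hsum : ∑ ω, p ω = 1)
    (A : Ω → α) (ε : Ω → 𝓔) (V : Ω → 𝓥) (g : α → 𝓔 → ℝ) (π : α → ℝ) (Y : Ω → ℝ)
    (hY : ∀ ω, Y ω = g (A ω) (ε ω))
    -- common support: every (a, v)-cell that is conditioned on has positive probability
    (hpos : ∀ (a : α) (ω : Ω), 0 < pr p (fun ω' => A ω' = a ∧ V ω' = V ω))
    -- A ⊥ ε | V
    (hCI : ∀ (a : α) (e : 𝓔) (v : 𝓥),
      pr p (fun ω => A ω = a ∧ ε ω = e ∧ V ω = v) * pr p (fun ω => V ω = v)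
        = pr p (fun ω => A ω = a ∧ V ω = v) * pr p (fun ω => ε ω = e ∧ V ω = v)) :
    ∑ ω, p ω * (∑ a, π a *
        (cex p Y (fun ω' => A ω' = a ∧ V ω' = V ω)
          / pr p (fun ω' => A ω' = a ∧ V ω' = V ω)))
      = ∑ ω, p ω * (∑ a, π a * g a (ε ω)) := by
  have key : ∀ (ω : Ω) (a : α),
      cex p Y (fun ω' => A ω' = a ∧ V ω' = V ω)
          / pr p (fun ω' => A ω' = a ∧ V ω' = V ω)
        = cex p (fun ω' => g a (ε ω')) (fun ω' => V ω' = V ω)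
          / pr p (fun ω' => V ω' = V ω) := by
    intro ω a
    exact step1 p A ε V g Y hY a (V ω) (hpos a ω) (pr_pos p hp ω rfl)
      (fun e => hCI a e (V ω))
  calc ∑ ω, p ω * (∑ a, π a *
        (cex p Y (fun ω' => A ω' = a ∧ V ω' = V ω)
          / pr p (fun ω' => A ω' = a ∧ V ω' = V ω)))
      = ∑ ω, ∑ a, π a * (p ω * (cex p (fun ω' => g a (ε ω')) (fun ω' => V ω' = V ω)
          / pr p (fun ω' => V ω' = V ω))) := by
        refine Finset.sum_congr rfl fun ω _ => ?_
        rw [Finset.mul_sum]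
        refine Finset.sum_congr rfl fun a _ => ?_
        rw [key ω a]; ring
    _ = ∑ a, π a * ∑ ω, p ω * (cex p (fun ω' => g a (ε ω')) (fun ω' => V ω' = V ω)
          / pr p (fun ω' => V ω' = V ω)) := by
        rw [Finset.sum_comm]
        exact Finset.sum_congr rfl fun a _ => by rw [Finset.mul_sum]
    _ = ∑ a, π a * ∑ ω, p ω * g a (ε ω) := by
        refine Finset.sum_congr rfl fun a _ => ?_
        rw [tower p hp V (fun ω => g a (ε ω))]
    _ = ∑ ω, p ω * (∑ a, π a * g a (ε ω)) := by
        simp_rw [Finset.mul_sum]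
        rw [Finset.sum_comm]
        exact Finset.sum_congr rfl fun ω _ => Finset.sum_congr rfl fun a _ => by ring
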